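/- For all n, m ∈ ℕ the operator (U*)ⁿUᵐ is scalable with J((U*)ⁿUᵐ) = q^{n−m}(U*)ⁿUᵐ, and as operators on 𝒟: ∂((U*)ⁿUᵐ) = q^{n−m+1}[m]_q (U*)ⁿU^{m−1} and ∂̄((U*)ⁿUᵐ) = [n]_q (U*)^{n−1}Uᵐ (the right-hand sides being 0 when m = 0, resp. n = 0). Consequently, for n, m ≥ 1, iterating these formulas gives ∂̄(∂((U*)ⁿUᵐ)) = q·∂(∂̄((U*)ⁿUᵐ)) = q^{n−m+1}[m]_q [n]_q (U*)^{n−1}U^{m−1} on 𝒟. -/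

import Mathlib

open MeasureTheory InnerProductSpace

noncomputable section

/-- `H = ℓ²(ℕ, ℂ)`. -/
abbrev H : Type := lp (fun _ : ℕ => ℂ) 2

/-- The standard orthonormal basis `e n` of `ℓ²(ℕ, ℂ)`. -/
noncomputable def e (n : ℕ) : H := lp.single 2 n 1

/-- The operator `δ̄`, defined on `𝒟 = range j` by `δ̄(jψ) = q⁻¹(q−1)⁻¹ Uψ`. -/
noncomputable def dbar (q : ℝ) (U j : H →L[ℂ] H) (φ : H) : H :=
  ((q : ℂ)⁻¹ * ((q : ℂ) - 1)⁻¹) • U (Function.invFun (⇑j) φ)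

/-- The operator `δ`, defined on `𝒟 = range j` by `δ(jψ) = q(1−q)⁻¹ U*ψ`. -/
noncomputable def ddel (q : ℝ) (U j : H →L[ℂ] H) (φ : H) : H :=
  ((q : ℂ) * (1 - (q : ℂ))⁻¹) • (ContinuousLinearMap.adjoint U) (Function.invFun (⇑j) φ)

/-- The `q`-integer `[n]_q = (1−qⁿ)/(1−q)`, as a complex number. -/
noncomputable def Mq (q : ℝ) (n : ℕ) : ℂ := (((1 - q ^ n) / (1 - q) : ℝ) : ℂ)

/-- The monomial `(U*)ⁿUᵐ`. -/
noncomputable def mon (U : H →L[ℂ] H) (n m : ℕ) : H →L[ℂ] H :=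
  (ContinuousLinearMap.adjoint U) ^ n * U ^ m

/-- `(U*)ⁿUᵐ` is scalable with `J((U*)ⁿUᵐ) = q^{n−m}(U*)ⁿUᵐ`; on `𝒟`,
`∂((U*)ⁿUᵐ) = q^{n−m+1}[m]_q (U*)ⁿU^{m−1}` and `∂̄((U*)ⁿUᵐ) = [n]_q (U*)^{n−1}Uᵐ`;
and for `n, m ≥ 1`, `∂̄(∂((U*)ⁿUᵐ)) = q ∂(∂̄((U*)ⁿUᵐ)) = q^{n−m+1}[m]_q[n]_q (U*)^{n−1}U^{m−1}`
on `𝒟`. -/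

local notation "⟪" x ", " y "⟫" => @inner ℂ _ _ x y

lemma coord_eq (f : H) (i : ℕ) : ⟪e i, f⟫ = f i := by
  rw [e, lp.inner_single_left]
  simp [RCLike.inner_apply]

lemma ext_basis {T S : H →L[ℂ] H} (h : ∀ k, T (e k) = S (e k)) : T = S := by
  refine ContinuousLinearMap.ext fun f => ?_
  have hf := lp.hasSum_single (E := fun _ : ℕ => ℂ) ENNReal.ofNat_ne_top f
  have hs : ∀ i : ℕ, lp.single 2 i (f i) = f i • e i := by
    intro i
    rw [e, ← lp.single_smul]
    norm_num
  have h1 : HasSum (fun i => T (lp.single 2 i (f i))) (T f) := hf.mapL T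
  have h2 : HasSum (fun i => S (lp.single 2 i (f i))) (S f) := hf.mapL S
  refine h1.unique (h2.congr_fun ?_)
  intro i
  rw [hs, _root_.map_smul, _root_.map_smul, h]

lemma e_apply (k i : ℕ) : (e k : ∀ _ : ℕ, ℂ) i = if i = k then 1 else 0 := by
  rw [e, lp.single_apply]
  split_ifs with h
  · subst h; simp
  · simp [h]

lemma adj_e (q : ℝ) (U : H →L[ℂ] H)
    (hU : ∀ n : ℕ, U (e n) = (Real.sqrt (1 - q ^ (n + 1)) : ℂ) • e (n + 1)) (k : ℕ) :
    ContinuousLinearMap.adjoint U (e k) = ((Real.sqrt (1 - q ^ k) : ℝ) : ℂ) • e (k - 1) := by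
  apply lp.ext
  funext i
  have lhs : (ContinuousLinearMap.adjoint U (e k) : ∀ _ : ℕ, ℂ) i
      = ((Real.sqrt (1 - q ^ (i + 1)) : ℝ) : ℂ) * (e k : ∀ _ : ℕ, ℂ) (i + 1) := by
    rw [← coord_eq, ContinuousLinearMap.adjoint_inner_right, hU, inner_smul_left, coord_eq]
    simp
  rw [lhs]
  have rhs : (((((Real.sqrt (1 - q ^ k) : ℝ) : ℂ)) • e (k - 1) : H) : ∀ _ : ℕ, ℂ) i
      = ((Real.sqrt (1 - q ^ k) : ℝ) : ℂ) * (e (k - 1) : ∀ _ : ℕ, ℂ) i := by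
    rfl
  rw [rhs, e_apply, e_apply]
  rcases k with _ | k'
  · simp
  · by_cases hik : i = k'
    · subst hik; simp
    · have h1 : ¬ (i + 1 = k' + 1) := by omega
      have h2 : ¬ (i = k' + 1 - 1) := by omega
      simp [h1, h2, hik]

lemma hsqc (r : ℝ) (hr : 0 ≤ r) :
    ((Real.sqrt r : ℝ) : ℂ) * ((Real.sqrt r : ℝ) : ℂ) = (r : ℂ) := by
  rw [← Complex.ofReal_mul, Real.mul_self_sqrt hr]

lemma hpow {q : ℝ} (hq0 : 0 < q) (hq1 : q < 1) (k : ℕ) : (0:ℝ) ≤ 1 - q ^ k :=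
  sub_nonneg.2 (pow_le_one₀ hq0.le hq1.le)

section rels
variable (q : ℝ) (hq0 : 0 < q) (hq1 : q < 1) (U j : H →L[ℂ] H)
  (hU : ∀ n : ℕ, U (e n) = (Real.sqrt (1 - q ^ (n + 1)) : ℂ) • e (n + 1))
  (hj : ∀ n : ℕ, j (e n) = ((q : ℂ) ^ n) • e n)

include hq0 hq1 hU hj in
lemma rel1' : ContinuousLinearMap.adjoint U * U = 1 - (q:ℂ) • j := by
  apply ext_basis; intro k
  rw [ContinuousLinearMap.mul_apply, hU k, _root_.map_smul, adj_e q U hU (k+1)]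
  simp only [Nat.add_sub_cancel]
  rw [smul_smul, hsqc _ (hpow hq0 hq1 (k+1))]
  rw [ContinuousLinearMap.sub_apply, ContinuousLinearMap.one_apply,
    ContinuousLinearMap.smul_apply, hj k, smul_smul,
    show e k - ((q:ℂ) * (q:ℂ)^k) • e k = ((1:ℂ) - (q:ℂ)*(q:ℂ)^k) • e k by
      rw [sub_smul, one_smul]]
  congr 1
  push_cast
  ring

include hq0 hq1 hU hj in
lemma rel2' : U * ContinuousLinearMap.adjoint U = 1 - j := by
  apply ext_basis; intro k
  rw [ContinuousLinearMap.mul_apply, adj_e q U hU k, _root_.map_smul,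
    ContinuousLinearMap.sub_apply, ContinuousLinearMap.one_apply, hj k,
    show e k - ((q:ℂ)^k) • e k = ((1:ℂ) - (q:ℂ)^k) • e k by rw [sub_smul, one_smul]]
  rcases k with _ | k'
  · norm_num
  · rw [hU, Nat.add_sub_cancel, smul_smul, hsqc _ (hpow hq0 hq1 (k'+1))]
    congr 1
    push_cast
    ring

include hU hj in
lemma rel3' : j * U = (q:ℂ) • (U * j) := by
  apply ext_basis; intro k
  rw [ContinuousLinearMap.mul_apply, hU k, _root_.map_smul, hj (k+1),
    ContinuousLinearMap.smul_apply, ContinuousLinearMap.mul_apply, hj k,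
    _root_.map_smul, hU k]
  rw [smul_smul, smul_smul, smul_smul]
  congr 1
  ring

include hU hj in
lemma rel4' : ContinuousLinearMap.adjoint U * j = (q:ℂ) • (j * ContinuousLinearMap.adjoint U) := by
  apply ext_basis; intro k
  rw [ContinuousLinearMap.mul_apply, hj k, _root_.map_smul, adj_e q U hU k,
    ContinuousLinearMap.smul_apply, ContinuousLinearMap.mul_apply, adj_e q U hU k,
    _root_.map_smul, hj (k-1)]
  rw [smul_smul, smul_smul, smul_smul]
  rcases k with _ | k'
  · norm_num
  · congr 1
    rw [Nat.add_sub_cancel]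
    ring

end rels

section alg
variable {R : Type*} [Ring R] [Algebra ℂ R] (qc : ℂ) (a u jj : R)

lemma pjU (h3 : jj * u = qc • (u * jj)) : ∀ m : ℕ, jj * u ^ m = qc ^ m • (u ^ m * jj) := by
  intro m
  induction m with
  | zero => simp
  | succ m ih =>
    rw [pow_succ, ← mul_assoc, ih, smul_mul_assoc, mul_assoc, h3, mul_smul_comm, smul_smul,
      ← pow_succ, ← mul_assoc, ← pow_succ]

lemma pja (h4 : a * jj = qc • (jj * a)) : ∀ n : ℕ, a ^ n * jj = qc ^ n • (jj * a ^ n) := by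
  intro n
  induction n with
  | zero => simp
  | succ n ih =>
    rw [pow_succ, mul_assoc, h4, mul_smul_comm, ← mul_assoc, ih, smul_mul_assoc, smul_smul,
      ← pow_succ, mul_assoc, ← pow_succ, pow_succ' qc n]

lemma comm_del (h1 : a * u = 1 - qc • jj) (h2 : u * a = 1 - jj)
    (h3 : jj * u = qc • (u * jj)) (n m : ℕ) :
    a * (a ^ n * u ^ m) - (a ^ n * u ^ m) * a
      = ((1:ℂ) - qc ^ m) • (a ^ n * u ^ (m - 1) * jj) := by
  rcases m with _ | m
  · have : a * (a ^ n * u ^ 0) - (a ^ n * u ^ 0) * a = 0 := by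
      simp only [pow_zero, mul_one]
      rw [← pow_succ, ← pow_succ', sub_self]
    rw [this]
    simp
  · have t1 : a * (a ^ n * u ^ (m + 1)) = a ^ n * ((a * u) * u ^ m) :=
      calc a * (a ^ n * u ^ (m + 1)) = (a * a ^ n) * u ^ (m + 1) := by rw [mul_assoc]
        _ = (a ^ n * a) * u ^ (m + 1) := by rw [← pow_succ', pow_succ]
        _ = a ^ n * ((a * u) * u ^ m) := by rw [pow_succ' u]; simp only [mul_assoc]
    have t2 : (a ^ n * u ^ (m + 1)) * a = (a ^ n * u ^ m) * (u * a) := by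
      rw [pow_succ]; simp only [mul_assoc]
    rw [t1, t2, h1, h2]
    simp only [mul_sub, sub_mul, one_mul, mul_one, smul_mul_assoc, mul_smul_comm]
    rw [pjU qc u jj h3 m]
    simp only [Nat.add_sub_cancel, mul_smul_comm, smul_smul, mul_assoc]
    module

lemma comm_dbar (h1 : a * u = 1 - qc • jj) (h2 : u * a = 1 - jj)
    (h3 : jj * u = qc • (u * jj)) (h4 : a * jj = qc • (jj * a)) (hqc : qc ≠ 0) (n m : ℕ) :
    u * (a ^ (n + 1) * u ^ m) - (a ^ (n + 1) * u ^ m) * u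
      = (qc ^ (m + 1) - qc ^ m * (qc ^ n)⁻¹) • (a ^ n * u ^ m * jj) := by
  have hja : jj * a ^ n = (qc ^ n)⁻¹ • (a ^ n * jj) := by
    rw [pja qc a jj h4 n, smul_smul, inv_mul_cancel₀ (pow_ne_zero n hqc), one_smul]
  have t1 : u * (a ^ (n + 1) * u ^ m) = (u * a) * (a ^ n * u ^ m) := by
    rw [pow_succ' a]; simp only [mul_assoc]
  have t2 : (a ^ (n + 1) * u ^ m) * u = a ^ n * ((a * u) * u ^ m) :=
    calc (a ^ (n + 1) * u ^ m) * u = a ^ (n + 1) * (u ^ m * u) := by simp only [mul_assoc]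
      _ = a ^ (n + 1) * (u * u ^ m) := by rw [← pow_succ u m, pow_succ' u m]
      _ = a ^ n * ((a * u) * u ^ m) := by
        rw [pow_succ a, mul_assoc]; simp only [mul_assoc]
  rw [t1, t2, h1, h2]
  simp only [mul_sub, sub_mul, one_mul, mul_one, smul_mul_assoc, mul_smul_comm]
  rw [← mul_assoc jj, hja]
  simp only [smul_mul_assoc, mul_assoc]
  rw [pjU qc u jj h3 m]
  simp only [mul_smul_comm, smul_smul, mul_assoc]
  module

lemma monOp_j (h3 : jj * u = qc • (u * jj)) (h4 : a * jj = qc • (jj * a)) (hqc : qc ≠ 0)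
    (n m : ℕ) :
    (a ^ n * u ^ m) * jj = (qc ^ n * (qc ^ m)⁻¹) • (jj * (a ^ n * u ^ m)) := by
  have hu : u ^ m * jj = (qc ^ m)⁻¹ • (jj * u ^ m) := by
    rw [pjU qc u jj h3 m, smul_smul, inv_mul_cancel₀ (pow_ne_zero m hqc), one_smul]
  rw [mul_assoc, hu, mul_smul_comm, ← mul_assoc, pja qc a jj h4 n, smul_mul_assoc, smul_smul,
    mul_assoc, mul_comm ((qc ^ m)⁻¹)]

end alg

set_option maxHeartbeats 1600000 in
theorem stmt8 (q : ℝ) (hq0 : 0 < q) (hq1 : q < 1)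
    (U : H →L[ℂ] H)
    (hU : ∀ n : ℕ, U (e n) = (Real.sqrt (1 - q ^ (n + 1)) : ℂ) • e (n + 1))
    (j : H →L[ℂ] H)
    (hj : ∀ n : ℕ, j (e n) = ((q : ℂ) ^ n) • e n)
    (hjinj : Function.Injective (⇑j))
    (n m : ℕ) :
    -- scalability with J((U*)ⁿUᵐ) = q^{n−m}(U*)ⁿUᵐ
    ((mon U n m).comp j = j.comp (((q : ℂ) ^ ((n : ℤ) - m)) • mon U n m)) ∧
    -- ∂((U*)ⁿUᵐ) = q^{n−m+1}[m]_q (U*)ⁿU^{m−1} on 𝒟 (right-hand side 0 when m = 0)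
    (∀ φ ∈ Set.range (⇑j),
      ddel q U j (mon U n m φ)
          - ((q : ℂ) ^ ((n : ℤ) - m)) • mon U n m (ddel q U j φ)
        = ((q : ℂ) ^ ((n : ℤ) - m + 1) * Mq q m) • mon U n (m - 1) φ) ∧
    -- ∂̄((U*)ⁿUᵐ) = [n]_q (U*)^{n−1}Uᵐ on 𝒟 (right-hand side 0 when n = 0)
    (∀ φ ∈ Set.range (⇑j),
      dbar q U j (mon U n m φ)
          - ((q : ℂ) ^ ((n : ℤ) - m)) • mon U n m (dbar q U j φ)
        = (Mq q n) • mon U (n - 1) m φ) ∧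
    -- iterated derivatives, for n, m ≥ 1
    (1 ≤ n → 1 ≤ m → ∀ φ ∈ Set.range (⇑j),
      -- ∂̄ applied to ∂((U*)ⁿUᵐ) = q^{n−m+1}[m]_q (U*)ⁿU^{m−1}
      (dbar q U j ((((q : ℂ) ^ ((n : ℤ) - m + 1) * Mq q m) • mon U n (m - 1)) φ)
          - ((q : ℂ) ^ ((n : ℤ) - (m - 1 : ℕ)) * ((q : ℂ) ^ ((n : ℤ) - m + 1) * Mq q m))
              • mon U n (m - 1) (dbar q U j φ)
        = ((q : ℂ) ^ ((n : ℤ) - m + 1) * Mq q m * Mq q n) • mon U (n - 1) (m - 1) φ) ∧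
      -- q times ∂ applied to ∂̄((U*)ⁿUᵐ) = [n]_q (U*)^{n−1}Uᵐ gives the same answer
      ((q : ℂ) • (ddel q U j (((Mq q n) • mon U (n - 1) m) φ)
          - ((q : ℂ) ^ (((n - 1 : ℕ) : ℤ) - m) * Mq q n) • mon U (n - 1) m (ddel q U j φ))
        = ((q : ℂ) ^ ((n : ℤ) - m + 1) * Mq q m * Mq q n) • mon U (n - 1) (m - 1) φ)) := by
  have hqc : (q:ℂ) ≠ 0 := Complex.ofReal_ne_zero.2 hq0.ne'
  have hq1c : (1:ℂ) - (q:ℂ) ≠ 0 := by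
    intro h
    have : (q:ℂ) = 1 := by linear_combination -h
    have : q = 1 := by exact_mod_cast this
    linarith
  have hq1c' : (q:ℂ) - 1 ≠ 0 := by
    intro h
    apply hq1c
    linear_combination -h
  set A := ContinuousLinearMap.adjoint U with hA
  have h1 : A * U = 1 - (q:ℂ) • j := rel1' q hq0 hq1 U j hU hj
  have h2 : U * A = 1 - j := rel2' q hq0 hq1 U j hU hj
  have h3 : j * U = (q:ℂ) • (U * j) := rel3' q U j hU hj
  have h4 : A * j = (q:ℂ) • (j * A) := rel4' q U j hU hj
  have hinv : ∀ x : H, Function.invFun (⇑j) (j x) = x := fun x =>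
    Function.leftInverse_invFun hjinj x
  have hMq : ∀ k : ℕ, Mq q k = ((1:ℂ) - (q:ℂ)^k) * ((1:ℂ) - (q:ℂ))⁻¹ := by
    intro k
    rw [Mq]
    push_cast
    rw [div_eq_mul_inv]
  have hz : ∀ a b : ℕ, (q:ℂ)^((a:ℤ) - b) = (q:ℂ)^a * ((q:ℂ)^b)⁻¹ := by
    intro a b
    rw [zpow_sub₀ hqc, zpow_natCast, zpow_natCast, div_eq_mul_inv]
  have hz1 : ∀ a b : ℕ, (q:ℂ)^((a:ℤ) - b + 1) = (q:ℂ)^a * ((q:ℂ)^b)⁻¹ * q := by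
    intro a b
    rw [zpow_add₀ hqc, zpow_one, hz]
  have hmonj : ∀ a b : ℕ, (A^a * U^b) * j = ((q:ℂ)^a * ((q:ℂ)^b)⁻¹) • (j * (A^a * U^b)) :=
    fun a b => monOp_j (q:ℂ) A U j h3 h4 hqc a b
  have happly : ∀ (B : H →L[ℂ] H) (ν : ℂ), B * j = ν • (j * B) → ∀ ψ : H,
      B (j ψ) = j (ν • B ψ) := by
    intro B ν hB ψ
    have h := congrArg (fun T : H →L[ℂ] H => T ψ) hB
    simp only [ContinuousLinearMap.mul_apply, ContinuousLinearMap.smul_apply] at h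
    rw [h, ← _root_.map_smul]
  have ddel0 : ∀ ψ : H, ddel q U j (j ψ) = ((q:ℂ) * (1 - (q:ℂ))⁻¹) • (A ψ) := by
    intro ψ
    simp only [ddel]
    rw [hinv]
  have dbar0 : ∀ ψ : H, dbar q U j (j ψ) = ((q:ℂ)⁻¹ * ((q:ℂ) - 1)⁻¹) • (U ψ) := by
    intro ψ
    simp only [dbar]
    rw [hinv]
  have hddel : ∀ (B : H →L[ℂ] H) (ν : ℂ), B * j = ν • (j * B) → ∀ ψ : H,
      ddel q U j (B (j ψ)) = ((q:ℂ) * (1 - (q:ℂ))⁻¹ * ν) • ((A * B) ψ) := by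
    intro B ν hB ψ
    rw [happly B ν hB ψ, ddel0, _root_.map_smul, smul_smul,
      ← ContinuousLinearMap.mul_apply A B, mul_assoc]
  have hdbar : ∀ (B : H →L[ℂ] H) (ν : ℂ), B * j = ν • (j * B) → ∀ ψ : H,
      dbar q U j (B (j ψ)) = ((q:ℂ)⁻¹ * ((q:ℂ) - 1)⁻¹ * ν) • ((U * B) ψ) := by
    intro B ν hB ψ
    rw [happly B ν hB ψ, dbar0, _root_.map_smul, smul_smul,
      ← ContinuousLinearMap.mul_apply U B, mul_assoc]
  have hBs : ∀ (μ' : ℂ) (a b : ℕ),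
      (μ' • (A^a * U^b)) * j = ((q:ℂ)^a * ((q:ℂ)^b)⁻¹) • (j * (μ' • (A^a * U^b))) := by
    intro μ' a b
    rw [smul_mul_assoc, hmonj a b, mul_smul_comm, smul_comm]
  refine ⟨?_, ?_, ?_, ?_⟩
  · -- part 1
    refine ContinuousLinearMap.ext fun ψ => ?_
    simp only [ContinuousLinearMap.comp_apply, mon, ← hA]
    rw [← ContinuousLinearMap.mul_apply (A^n * U^m) j, hmonj n m]
    simp only [ContinuousLinearMap.smul_apply, ContinuousLinearMap.mul_apply,
      _root_.map_smul, hz]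
  · -- part 2
    rintro φ ⟨ψ, rfl⟩
    simp only [mon, ← hA]
    rw [hddel (A^n * U^m) _ (hmonj n m) ψ, ddel0 ψ, _root_.map_smul, smul_smul,
      ← ContinuousLinearMap.mul_apply (A^n * U^m) A,
      ← ContinuousLinearMap.mul_apply (A^n * U^(m-1)) j ψ]
    have hc := congrArg (fun T : H →L[ℂ] H => T ψ) (comm_del (q:ℂ) A U j h1 h2 h3 n m)
    simp only [ContinuousLinearMap.sub_apply, ContinuousLinearMap.smul_apply] at hc
    have hs : (q:ℂ)^((n:ℤ) - m + 1) * Mq q m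
        = ((q:ℂ) * (1 - (q:ℂ))⁻¹ * ((q:ℂ)^n * ((q:ℂ)^m)⁻¹)) * ((1:ℂ) - (q:ℂ)^m) := by
      rw [hz1, hMq]
      ring
    rw [hs, hz]
    linear_combination (norm := module)
      ((q:ℂ) * (1 - (q:ℂ))⁻¹ * ((q:ℂ)^n * ((q:ℂ)^m)⁻¹)) • hc
  · -- part 3
    rintro φ ⟨ψ, rfl⟩
    simp only [mon, ← hA]
    rcases n with _ | n'
    · rw [hdbar (A^0 * U^m) _ (hmonj 0 m) ψ, dbar0 ψ, _root_.map_smul, smul_smul,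
        ← ContinuousLinearMap.mul_apply (A^0 * U^m) U, hz]
      have hcomm : U * (A^0 * U^m) = (A^0 * U^m) * U := by
        simp only [pow_zero, one_mul]
        rw [← pow_succ', pow_succ]
      rw [hcomm, show Mq q 0 = 0 by simp [Mq], zero_smul, sub_eq_zero, mul_comm]
    · simp only [Nat.add_sub_cancel]
      rw [hdbar (A^(n'+1) * U^m) _ (hmonj (n'+1) m) ψ, dbar0 ψ, _root_.map_smul, smul_smul,
        ← ContinuousLinearMap.mul_apply (A^(n'+1) * U^m) U,
        ← ContinuousLinearMap.mul_apply (A^n' * U^m) j ψ]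
      have hc := congrArg (fun T : H →L[ℂ] H => T ψ)
        (comm_dbar (q:ℂ) A U j h1 h2 h3 h4 hqc n' m)
      simp only [ContinuousLinearMap.sub_apply, ContinuousLinearMap.smul_apply] at hc
      have hs : Mq q (n'+1) = ((q:ℂ)⁻¹ * ((q:ℂ) - 1)⁻¹ * ((q:ℂ)^(n'+1) * ((q:ℂ)^m)⁻¹))
          * ((q:ℂ)^(m+1) - (q:ℂ)^m * ((q:ℂ)^n')⁻¹) := by
        rw [hMq]
        field_simp
        ring
      rw [hs, hz]
      linear_combination (norm := module)
        ((q:ℂ)⁻¹ * ((q:ℂ) - 1)⁻¹ * ((q:ℂ)^(n'+1) * ((q:ℂ)^m)⁻¹)) • hc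
  · -- part 4
    intro hn hm
    rintro φ ⟨ψ, rfl⟩
    obtain ⟨n', rfl⟩ : ∃ n', n = n' + 1 := ⟨n - 1, by omega⟩
    obtain ⟨m', rfl⟩ : ∃ m', m = m' + 1 := ⟨m - 1, by omega⟩
    simp only [mon, ← hA, Nat.add_sub_cancel]
    constructor
    · rw [hdbar (((q:ℂ) ^ (((n'+1 : ℕ) : ℤ) - ((m'+1 : ℕ) : ℤ) + 1) * Mq q (m'+1)) •
          (A ^ (n'+1) * U ^ m')) _ (hBs _ (n'+1) m') ψ, dbar0 ψ, mul_smul_comm,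
        _root_.map_smul,
        ← ContinuousLinearMap.mul_apply (A^(n'+1) * U^m') U,
        ← ContinuousLinearMap.mul_apply (A^n' * U^m') j ψ]
      simp only [ContinuousLinearMap.smul_apply, smul_smul]
      have hc := congrArg (fun T : H →L[ℂ] H => T ψ)
        (comm_dbar (q:ℂ) A U j h1 h2 h3 h4 hqc n' m')
      simp only [ContinuousLinearMap.sub_apply, ContinuousLinearMap.smul_apply] at hc
      have hs : Mq q (n'+1) = ((q:ℂ)⁻¹ * ((q:ℂ) - 1)⁻¹ * ((q:ℂ)^(n'+1) * ((q:ℂ)^m')⁻¹))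
          * ((q:ℂ)^(m'+1) - (q:ℂ)^m' * ((q:ℂ)^n')⁻¹) := by
        rw [hMq]
        field_simp
        ring
      rw [hz, hs]
      linear_combination (norm := module)
        ((q:ℂ)⁻¹ * ((q:ℂ) - 1)⁻¹ * ((q:ℂ)^(n'+1) * ((q:ℂ)^m')⁻¹) *
          ((q:ℂ) ^ (((n'+1 : ℕ) : ℤ) - ((m'+1 : ℕ) : ℤ) + 1) * Mq q (m'+1))) • hc
    · rw [hddel ((Mq q (n'+1)) • (A ^ n' * U ^ (m'+1))) _ (hBs _ n' (m'+1)) ψ, ddel0 ψ,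
        mul_smul_comm, _root_.map_smul,
        ← ContinuousLinearMap.mul_apply (A^n' * U^(m'+1)) A,
        ← ContinuousLinearMap.mul_apply (A^n' * U^m') j ψ]
      simp only [ContinuousLinearMap.smul_apply, smul_smul, smul_sub]
      have hc := congrArg (fun T : H →L[ℂ] H => T ψ)
        (comm_del (q:ℂ) A U j h1 h2 h3 n' (m'+1))
      simp only [ContinuousLinearMap.sub_apply, ContinuousLinearMap.smul_apply,
        Nat.add_sub_cancel] at hc
      have hs : (q:ℂ) ^ (((n'+1 : ℕ) : ℤ) - ((m'+1 : ℕ) : ℤ) + 1) * Mq q (m'+1)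
          = ((q:ℂ) * ((q:ℂ) * (1 - (q:ℂ))⁻¹ * ((q:ℂ)^n' * ((q:ℂ)^(m'+1))⁻¹)))
            * ((1:ℂ) - (q:ℂ)^(m'+1)) := by
        rw [hz1, hMq]
        ring
      rw [hz, hs]
      linear_combination (norm := module)
        ((q:ℂ) * ((q:ℂ) * (1 - (q:ℂ))⁻¹ * ((q:ℂ)^n' * ((q:ℂ)^(m'+1))⁻¹)) * Mq q (n'+1)) • hc

end
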